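/- Let s, r ≥ 0 and d ≥ 1 be integers, let k ≥ 2, let a be a primitive k-th root of unity, and suppose X ∈ E(s,r,d) with data (λ, Q, P, E) is left invariant by the rotation T(w) = a·w (of order k about C = 0), and that 0 is a root of Q of multiplicity ν ≥ 1 (a zero of X). Then k | r, k | d, k | (ν − 1), and there exist λ' ∈ ℂ \ {0}, monic polynomials Q', P' ∈ ℂ[w] with no common roots, deg Q' = (s−1)/k + 1 and deg P' = r/k, and a polynomial E' ∈ ℂ[w] with deg E' = d/k, such that k·z^{k−1}·λ·Q(z)·exp(E(z))·P'(z^k) = λ'·Q'(z^k)·exp(E'(z^k))·P(z) for all z ∈ ℂ; that is, the pushforward of X under z ↦ z^k is the element of E((s−1)/k + 1, r/k, d/k) with data (λ', Q', P', E'). -/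

import Mathlib

open Polynomial

noncomputable section

/-- The data `(λ, Q, P, E)` of an element `X ∈ E(s,r,d)`:
`λ ≠ 0`, `Q`, `P` monic of degrees `s`, `r` with no common roots,
and `deg E = d`. -/
def EData (s r d : ℕ) (lam : ℂ) (Q P E : Polynomial ℂ) : Prop :=
  lam ≠ 0 ∧ Q.Monic ∧ P.Monic ∧ Q.natDegree = s ∧ P.natDegree = r ∧
    E.natDegree = d ∧ ∀ z : ℂ, ¬ (Q.IsRoot z ∧ P.IsRoot z)

/-- The affine map `T(w) = a·w + b` leaves the vector field with data `(λ,Q,P,E)`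
invariant: `Q(aw+b)·P(w)·exp(E(aw+b)) = a·Q(w)·P(aw+b)·exp(E(w))` for all `w`. -/
def LeavesInv (Q P E : Polynomial ℂ) (a b : ℂ) : Prop :=
  ∀ w : ℂ,
    Q.eval (a * w + b) * P.eval w * Complex.exp (E.eval (a * w + b)) =
      a * Q.eval w * P.eval (a * w + b) * Complex.exp (E.eval w)

lemma coeff_comp_CaX (p : Polynomial ℂ) (a : ℂ) (n : ℕ) :
    (p.comp (C a * X)).coeff n = a ^ n * p.coeff n := by
  induction p using Polynomial.induction_on' with
  | add p q hp hq => simp [add_comp, hp, hq, mul_add]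
  | monomial i c =>
      rw [monomial_comp, mul_pow, ← C_pow, ← mul_assoc, ← C_mul, coeff_C_mul, coeff_X_pow,
        coeff_monomial]
      by_cases h : n = i
      · subst h; simp; ring
      · rw [if_neg h, if_neg (fun hh : i = n => h hh.symm)]; ring

lemma my_expand_contract (k : ℕ) (hk : k ≠ 0) (f : Polynomial ℂ)
    (h : ∀ n, f.coeff n ≠ 0 → k ∣ n) :
    expand ℂ k (contract k f) = f := by
  ext n
  rw [coeff_expand (Nat.pos_of_ne_zero hk), coeff_contract hk]
  split_ifs with hdvd
  · rw [Nat.div_mul_cancel hdvd]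
  · by_contra hne
    exact hdvd (h n fun h0 => hne h0.symm)

lemma isCoprime_of_no_common_root {Q P : Polynomial ℂ} (hQ : Q ≠ 0)
    (h : ∀ z : ℂ, ¬ (Q.IsRoot z ∧ P.IsRoot z)) : IsCoprime Q P := by
  classical
  rw [← EuclideanDomain.gcd_isUnit_iff]
  by_contra hu
  have hg0 : EuclideanDomain.gcd Q P ≠ 0 := fun h0 => hQ (EuclideanDomain.gcd_eq_zero_iff.mp h0).1
  have hdeg : 0 < (EuclideanDomain.gcd Q P).degree :=
    degree_pos_of_ne_zero_of_nonunit hg0 hu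
  obtain ⟨z, hz⟩ := Complex.exists_root hdeg
  exact h z ⟨hz.dvd (EuclideanDomain.gcd_dvd_left Q P), hz.dvd (EuclideanDomain.gcd_dvd_right Q P)⟩

/-- if `X ∈ E(s,r,d)` is invariant under the rotation
`T(w) = a·w` of order `k ≥ 2` about `0`, and `0` is a zero of `X` of
multiplicity `ν ≥ 1`, then `k ∣ r`, `k ∣ d`, `k ∣ (ν−1)`, and the pushforward
of `X` under `z ↦ z^k` is an element of `E((s−1)/k + 1, r/k, d/k)`. -/
theorem stmt17 (s r d : ℕ) (hd : 1 ≤ d)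
    (lam : ℂ) (Q P E : Polynomial ℂ) (hX : EData s r d lam Q P E)
    (k : ℕ) (hk : 2 ≤ k) (a : ℂ) (hprim : IsPrimitiveRoot a k)
    (hinv : LeavesInv Q P E a 0)
    (hν : 1 ≤ Q.rootMultiplicity 0) :
    k ∣ r ∧ k ∣ d ∧ k ∣ (Q.rootMultiplicity 0 - 1) ∧
    ∃ (lam' : ℂ) (Q' P' E' : Polynomial ℂ),
      lam' ≠ 0 ∧ Q'.Monic ∧ P'.Monic ∧
      (∀ z : ℂ, ¬ (Q'.IsRoot z ∧ P'.IsRoot z)) ∧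
      Q'.natDegree = (s - 1) / k + 1 ∧ P'.natDegree = r / k ∧
      E'.natDegree = d / k ∧
      ∀ z : ℂ,
        (k : ℂ) * z ^ (k - 1) * lam * Q.eval z * Complex.exp (E.eval z) *
            P'.eval (z ^ k) =
          lam' * Q'.eval (z ^ k) * Complex.exp (E'.eval (z ^ k)) * P.eval z := by
  obtain ⟨hlam, hQm, hPm, hQd, hPd, hEd, hcop⟩ := hX
  have hk0 : k ≠ 0 := by omega
  have hkpos : 0 < k := by omega
  have ha0 : a ≠ 0 := hprim.ne_zero hk0
  have hQ0 : Q ≠ 0 := hQm.ne_zero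
  have hP0 : P ≠ 0 := hPm.ne_zero
  have hE0 : E ≠ 0 := fun h => by simp [h] at hEd; omega
  have hQroot0 : Q.IsRoot 0 := ((Polynomial.rootMultiplicity_pos hQ0).mp (by omega))
  have hP00 : P.eval 0 ≠ 0 := fun h => hcop 0 ⟨hQroot0, h⟩
  set Qa := Q.comp (C a * X) with hQadef
  set Pa := P.comp (C a * X) with hPadef
  set Ea := E.comp (C a * X) with hEadef
  have hev : ∀ (p : Polynomial ℂ) (z : ℂ), (p.comp (C a * X)).eval z = p.eval (a * z) := by
    intro p z; simp [eval_comp]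
  set G := Ea - E with hGdef
  -- Step A
  have stepA : ∀ w : ℂ,
      (Qa * P).eval w * Complex.exp (G.eval w) = (C a * Q * Pa).eval w := by
    intro w
    have h1 := hinv w
    simp only [add_zero] at h1
    have hGe : G.eval w = E.eval (a * w) - E.eval w := by
      simp [hGdef, hEadef, hev]
    have hexpE : Complex.exp (E.eval (a * w)) =
        Complex.exp (E.eval w) * Complex.exp (G.eval w) := by
      rw [← Complex.exp_add, hGe]; ring_nf
    rw [hexpE] at h1
    have h2 : (Q.eval (a * w) * P.eval w * Complex.exp (G.eval w)) * Complex.exp (E.eval w)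
        = (a * Q.eval w * P.eval (a * w)) * Complex.exp (E.eval w) := by
      rw [← h1]; ring
    have h3 := mul_right_cancel₀ (Complex.exp_ne_zero _) h2
    simp only [eval_mul, eval_C, hQadef, hPadef, hev]
    rw [← h3]
  have hQa0 : Qa ≠ 0 := by
    intro h
    apply hQ0
    apply Polynomial.funext
    intro z
    have := congrArg (Polynomial.eval (a⁻¹ * z)) h
    rw [hev] at this
    rw [mul_inv_cancel_left₀ ha0] at this
    simpa using this
  have hB0 : Qa * P ≠ 0 := mul_ne_zero hQa0 hP0
  -- Step B : G constant
  have hGdeg : G.natDegree = 0 := by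
    by_contra hGd
    have hGpos : 0 < G.natDegree := Nat.pos_of_ne_zero hGd
    have hroot : ∀ c : ℂ, ∃ w : ℂ, G.eval w = c := by
      intro c
      have hdegpos : 0 < (G - C c).degree := by
        rw [← natDegree_pos_iff_degree_pos, natDegree_sub_C]
        exact hGpos
      obtain ⟨w, hw⟩ := Complex.exists_root hdegpos
      refine ⟨w, ?_⟩
      have h0 : G.eval w - c = 0 := by simpa using hw
      linear_combination h0
    -- first: D = 0
    have hroots2 : ∀ n : ℕ, ∃ w : ℂ, G.eval w = (n : ℂ) * (2 * Real.pi * Complex.I) :=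
      fun n => hroot _
    choose f hf using hroots2
    have hinj : Function.Injective f := by
      intro m n h
      have h2 : (m : ℂ) * (2 * Real.pi * Complex.I) = (n : ℂ) * (2 * Real.pi * Complex.I) := by
        rw [← hf m, ← hf n, h]
      have h2pi : (2 * (Real.pi : ℂ) * Complex.I) ≠ 0 := by
        simp [Real.pi_ne_zero, Complex.I_ne_zero]
      have := mul_right_cancel₀ h2pi h2
      exact_mod_cast this
    have hDroot : ∀ n : ℕ, (Qa * P - C a * Q * Pa).IsRoot (f n) := by
      intro n
      have h := stepA (f n)
      rw [hf n] at h
      have he1 : Complex.exp ((n : ℂ) * (2 * Real.pi * Complex.I)) = 1 := by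
        have h := Complex.exp_int_mul_two_pi_mul_I (n : ℤ)
        push_cast at h
        exact h
      rw [he1, mul_one] at h
      simp [IsRoot, h]
    have hD : Qa * P - C a * Q * Pa = 0 := by
      apply Polynomial.eq_zero_of_infinite_isRoot
      exact Set.infinite_of_injective_forall_mem hinj hDroot
    have hAB : ∀ w : ℂ, (Qa * P).eval w = (C a * Q * Pa).eval w := by
      intro w
      have := congrArg (Polynomial.eval w) hD
      simpa [sub_eq_zero] using this
    -- now get contradiction
    have hTfin : ((fun w => G.eval w) '' {z : ℂ | (Qa * P).eval z = 0}).Finite := by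
      apply Set.Finite.image
      exact Polynomial.finite_setOf_isRoot hB0
    have hex : ∃ n : ℕ, ((n : ℂ) + 1) ∉ (fun w => G.eval w) '' {z : ℂ | (Qa * P).eval z = 0} := by
      by_contra hall
      push_neg at hall
      have hinj2 : Function.Injective (fun n : ℕ => ((n : ℂ) + 1)) := by
        intro m n h
        simp only at h
        have : (m : ℂ) = n := by linear_combination h
        exact_mod_cast this
      exact (Set.infinite_of_injective_forall_mem hinj2 hall) hTfin
    obtain ⟨n, hn⟩ := hex
    obtain ⟨w, hw⟩ := hroot ((n : ℂ) + 1)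
    have hBw : (Qa * P).eval w ≠ 0 := by
      intro h0
      exact hn ⟨w, h0, hw⟩
    have h := stepA w
    rw [hAB w] at h
    have hexp1 : Complex.exp (G.eval w) = 1 := by
      have := mul_left_cancel₀ (by rw [← hAB w]; exact hBw) (h.trans (mul_one _).symm)
      exact this
    rw [hw] at hexp1
    have : Complex.exp (((n : ℝ) + 1 : ℝ) : ℂ) = 1 := by
      convert hexp1 using 2
      push_cast
      ring
    rw [← Complex.ofReal_exp] at this
    have h1 : Real.exp ((n : ℝ) + 1) = 1 := by exact_mod_cast this
    rw [Real.exp_eq_one_iff] at h1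
    have : (0:ℝ) < (n : ℝ) + 1 := by positivity
    linarith
  -- G = 0
  have hG0 : G = 0 := by
    have := Polynomial.eq_C_of_natDegree_eq_zero hGdeg
    have he0 : G.eval 0 = 0 := by
      simp [hGdef, hEadef, hev]
    rw [this]
    rw [this] at he0
    simp at he0
    rw [he0, map_zero]
  have hEaE : Ea = E := by
    have : Ea - E = 0 := hG0
    linear_combination this
  -- polynomial identity
  have hAB : Qa * P = C a * Q * Pa := by
    apply Polynomial.funext
    intro w
    have h := stepA w
    rw [hG0] at h
    simpa using h
  -- coprimality and divisibility
  have hcopA : IsCoprime Qa Pa := by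
    apply isCoprime_of_no_common_root hQa0
    intro z ⟨h1, h2⟩
    rw [IsRoot, hev] at h1
    rw [IsRoot, hev] at h2
    exact hcop (a * z) ⟨h1, h2⟩
  have hQadeg : Qa.natDegree = s := by
    rw [hQadef, natDegree_comp, natDegree_C_mul_X a ha0, hQd, mul_one]
  have hdvd : Qa ∣ C a * Q := by
    apply hcopA.dvd_of_dvd_mul_right
    exact ⟨P, hAB.symm⟩
  obtain ⟨u, hu⟩ := hdvd
  have hu0 : u ≠ 0 := by
    intro h
    rw [h, mul_zero] at hu
    exact (mul_ne_zero (C_ne_zero.mpr ha0) hQ0) hu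
  have hudeg : u.natDegree = 0 := by
    have h1 : (C a * Q).natDegree = s := by rw [natDegree_C_mul ha0, hQd]
    have h2 : (C a * Q).natDegree = Qa.natDegree + u.natDegree := by
      rw [hu, natDegree_mul hQa0 hu0]
    omega
  obtain ⟨c, hc⟩ : ∃ c : ℂ, u = C c := ⟨u.coeff 0, Polynomial.eq_C_of_natDegree_eq_zero hudeg⟩
  -- P = C c * Pa
  have hPrel : P = C c * Pa := by
    have h1 : Qa * P = Qa * (C c * Pa) := by
      rw [hAB, hu, hc]; ring
    exact mul_left_cancel₀ hQa0 h1
  -- coefficient relations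
  have hPc : ∀ n : ℕ, P.coeff n = c * (a ^ n * P.coeff n) := by
    intro n
    have h := congrArg (fun p => Polynomial.coeff p n) hPrel
    simp only [coeff_C_mul, hPadef, coeff_comp_CaX] at h
    exact h
  have hc1 : c = 1 := by
    have h0 := hPc 0
    rw [pow_zero, one_mul] at h0
    have hp0 : P.coeff 0 ≠ 0 := by rwa [coeff_zero_eq_eval_zero]
    have h2 : c * P.coeff 0 = 1 * P.coeff 0 := by linear_combination -h0
    exact mul_right_cancel₀ hp0 h2
  have hPcoeff : ∀ n : ℕ, P.coeff n ≠ 0 → a ^ n = 1 := by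
    intro n hn
    have h := hPc n
    rw [hc1, one_mul] at h
    have h2 : a ^ n * P.coeff n = 1 * P.coeff n := by linear_combination -h
    exact mul_right_cancel₀ hn h2
  have hQc : ∀ n : ℕ, a * Q.coeff n = a ^ n * Q.coeff n := by
    intro n
    have h := congrArg (fun p => Polynomial.coeff p n) hu
    simp only [hc, hc1, map_one, mul_one, coeff_C_mul, hQadef, coeff_comp_CaX] at h
    exact h
  have hQcoeff : ∀ n : ℕ, Q.coeff n ≠ 0 → a ^ n = a := by
    intro n hn
    have h2 : Q.coeff n * a = Q.coeff n * a ^ n := by linear_combination hQc n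
    exact (mul_left_cancel₀ hn h2).symm
  have hEc : ∀ n : ℕ, E.coeff n ≠ 0 → a ^ n = 1 := by
    intro n hn
    have h := congrArg (fun p => Polynomial.coeff p n) hEaE
    simp only [hEadef, coeff_comp_CaX] at h
    have h2 : E.coeff n * a ^ n = E.coeff n * 1 := by linear_combination h
    exact mul_left_cancel₀ hn h2
  -- divisibilities
  have hkr : k ∣ r := by
    have : P.coeff r ≠ 0 := by
      rw [← hPd]
      exact hPm.coeff_natDegree ▸ one_ne_zero
    exact (hprim.pow_eq_one_iff_dvd r).mp (hPcoeff r this)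
  have hkd : k ∣ d := by
    have : E.coeff d ≠ 0 := by
      rw [← hEd]
      exact fun h => hE0 (leadingCoeff_eq_zero.mp h)
    exact (hprim.pow_eq_one_iff_dvd d).mp (hEc d this)
  -- q_ν ≠ 0
  set ν := Q.rootMultiplicity 0 with hνdef
  obtain ⟨R0, hR0, hR0nd⟩ := Q.exists_eq_pow_rootMultiplicity_mul_and_not_dvd hQ0 0
  have hQν : Q.coeff ν ≠ 0 := by
    rw [map_zero, sub_zero] at hR0 hR0nd
    have : Q.coeff (0 + ν) = R0.coeff 0 := by
      rw [hR0]
      exact coeff_X_pow_mul R0 ν 0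
    rw [zero_add] at this
    rw [this]
    rw [X_dvd_iff] at hR0nd
    exact hR0nd
  have hQlow : ∀ n : ℕ, Q.coeff n ≠ 0 → 1 ≤ n ∧ k ∣ (n - 1) := by
    intro n hn
    have han : a ^ n = a := hQcoeff n hn
    have hn1 : 1 ≤ n := by
      by_contra h
      have : n = 0 := by omega
      rw [this, pow_zero] at han
      have hdvd1 : k ∣ 1 := (hprim.pow_eq_one_iff_dvd 1).mp (by rw [pow_one]; exact han.symm)
      have := Nat.le_of_dvd one_pos hdvd1
      omega
    constructor
    · exact hn1
    · have : a ^ (n - 1) * a = a := by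
        rw [← pow_succ]
        have : n - 1 + 1 = n := by omega
        rw [this, han]
      have h2 : a ^ (n - 1) = 1 := by
        field_simp at this
        exact this
      exact (hprim.pow_eq_one_iff_dvd (n - 1)).mp h2
  have hkν : k ∣ (ν - 1) := (hQlow ν hQν).2
  -- s ≥ 1 and k ∣ s - 1
  have hQs : Q.coeff s ≠ 0 := by
    rw [← hQd]
    exact hQm.coeff_natDegree ▸ one_ne_zero
  have hs1 : 1 ≤ s := (hQlow s hQs).1
  have hks : k ∣ (s - 1) := (hQlow s hQs).2
  refine ⟨hkr, hkd, hkν, ?_⟩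
  -- constructions
  have hQ00 : Q.coeff 0 = 0 := by
    rw [coeff_zero_eq_eval_zero]
    exact hQroot0
  set Q2 := Q.divX with hQ2def
  have hQsplit : X * Q2 = Q := by
    have := Q.X_mul_divX_add
    rw [hQ00, map_zero, add_zero] at this
    exact this
  have hQ2coeff : ∀ n : ℕ, Q2.coeff n = Q.coeff (n + 1) := fun n => Q.coeff_divX
  set R := contract k Q2 with hRdef
  have hRexp : expand ℂ k R = Q2 := by
    apply my_expand_contract k hk0
    intro n hn
    rw [hQ2coeff] at hn
    have := (hQlow (n + 1) hn).2
    simpa using this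
  set P' := contract k P with hP'def
  have hPexp : expand ℂ k P' = P := by
    apply my_expand_contract k hk0
    intro n hn
    exact (hprim.pow_eq_one_iff_dvd n).mp (hPcoeff n hn)
  set E' := contract k E with hE'def
  have hEexp : expand ℂ k E' = E := by
    apply my_expand_contract k hk0
    intro n hn
    exact (hprim.pow_eq_one_iff_dvd n).mp (hEc n hn)
  -- degrees
  have hQ2deg : Q2.natDegree = s - 1 := by
    rw [hQ2def, natDegree_divX_eq_natDegree_tsub_one, hQd]
  have hQ20 : Q2 ≠ 0 := by
    intro h
    apply hQs
    have : Q.coeff ((s - 1) + 1) = Q2.coeff (s - 1) := (hQ2coeff (s - 1)).symm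
    rw [show s - 1 + 1 = s by omega] at this
    rw [this, h, coeff_zero]
  have hR0' : R ≠ 0 := by
    intro h
    apply hQ20
    rw [← hRexp, h, map_zero]
  have hRdeg : R.natDegree = (s - 1) / k := by
    have h1 : (expand ℂ k R).natDegree = R.natDegree * k := natDegree_expand k R
    rw [hRexp, hQ2deg] at h1
    exact (Nat.div_eq_of_eq_mul_left hkpos h1).symm
  have hP'deg : P'.natDegree = r / k := by
    have h1 : (expand ℂ k P').natDegree = P'.natDegree * k := natDegree_expand k P'
    rw [hPexp, hPd] at h1
    exact (Nat.div_eq_of_eq_mul_left hkpos h1).symm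
  have hE'deg : E'.natDegree = d / k := by
    have h1 : (expand ℂ k E').natDegree = E'.natDegree * k := natDegree_expand k E'
    rw [hEexp, hEd] at h1
    exact (Nat.div_eq_of_eq_mul_left hkpos h1).symm
  -- monicity
  have hRm : R.Monic := by
    rw [Monic, leadingCoeff, hRdeg, hRdef, coeff_contract hk0]
    rw [Nat.div_mul_cancel hks]
    have : Q2.coeff (s - 1) = Q.coeff s := by
      rw [hQ2coeff, show s - 1 + 1 = s by omega]
    rw [this, ← hQd]
    exact hQm.coeff_natDegree
  have hP'm : P'.Monic := by
    rw [Monic, leadingCoeff, hP'deg, hP'def, coeff_contract hk0]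
    rw [Nat.div_mul_cancel hkr, ← hPd]
    exact hPm.coeff_natDegree
  set Q' := X * R with hQ'def
  have hQ'm : Q'.Monic := monic_X.mul hRm
  have hQ'deg : Q'.natDegree = (s - 1) / k + 1 := by
    rw [hQ'def, natDegree_mul X_ne_zero hR0', natDegree_X, hRdeg]
    omega
  -- evaluations
  have hPeval : ∀ z : ℂ, P'.eval (z ^ k) = P.eval z := by
    intro z
    rw [← hPexp, expand_eval]
  have hEeval : ∀ z : ℂ, E'.eval (z ^ k) = E.eval z := by
    intro z
    rw [← hEexp, expand_eval]
  have hReval : ∀ z : ℂ, R.eval (z ^ k) = Q2.eval z := by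
    intro z
    rw [← hRexp, expand_eval]
  have hQeval : ∀ z : ℂ, Q'.eval (z ^ k) = z ^ (k - 1) * Q.eval z := by
    intro z
    rw [hQ'def, eval_mul, eval_X, hReval]
    rw [← hQsplit, eval_mul, eval_X]
    rw [show z ^ k = z ^ (k - 1) * z by rw [← pow_succ, show k - 1 + 1 = k by omega]]
    ring
  -- coprimality of Q' P'
  have hcop' : ∀ z : ℂ, ¬ (Q'.IsRoot z ∧ P'.IsRoot z) := by
    intro w ⟨h1, h2⟩
    obtain ⟨z, hz⟩ := IsAlgClosed.exists_pow_nat_eq w hkpos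
    have hPz : P.eval z = 0 := by
      rw [← hPeval z, hz]
      exact h2
    have hQz : Q.eval z = 0 := by
      have hq := hQeval z
      rw [hz] at hq
      rw [IsRoot] at h1
      rw [h1] at hq
      by_cases hz0 : z = 0
      · rw [hz0]
        exact hQroot0
      · have := hq.symm
        rcases mul_eq_zero.mp this with h | h
        · exact absurd h (pow_ne_zero _ hz0)
        · exact h
    exact hcop z ⟨hQz, hPz⟩
  refine ⟨(k : ℂ) * lam, Q', P', E', ?_, hQ'm, hP'm, hcop', hQ'deg, hP'deg, hE'deg, ?_⟩
  · exact mul_ne_zero (Nat.cast_ne_zero.mpr hk0) hlam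
  · intro z
    rw [hPeval, hEeval, hQeval]
    ring
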